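/- arXiv:1602.03588 — 3 statements merged into one kernel-verified Lean document; each statement's English description precedes it below -/
import Mathlib

section
/- Let (R, m) be a regular local ring that is an integral domain with fraction field K, let I be an m-primary ideal of R, and let S = (A_a)_P be a local ring of Proj(overline(R[It])) dominating R. Suppose S is a unique factorization domain and there exists a discrete valuation ring V with S ⊆ V ⊆ K such that V dominates S (m_V ∩ S = m_S) and mV equals the maximal ideal m_V of V. Then the ideal mS of S is principal. -/
/-- A commutative ring is regular local if it is Noetherian, local, and its maximal
ideal can be generated by `krullDim` many elements. -/
def IsRegularLocal (A : Type*) [CommRing A] : Prop :=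
  IsNoetherianRing A ∧ ∃ h : IsLocalRing A, ∃ s : Finset A,
    (s.card : WithBot (WithTop ℕ)) = ringKrullDim A ∧
    Ideal.span (s : Set A) = @IsLocalRing.maximalIdeal A _ h

namespace Blowup

variable {K : Type*} [Field K]

/-- The set of nonunits of a subring `S` of a field `K`. -/
def nonunitsIn (S : Subring K) : Set K := {x : K | x ∈ S ∧ (x = 0 ∨ x⁻¹ ∉ S)}

/-- `mT` is the maximal ideal of the subring `T` of `K`, and `T` is local:
the ideal `mT` consists exactly of the nonunits of `T`. -/
def IsMaxIdeal (T : Subring K) (mT : Ideal T) : Prop :=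
  ∀ t : T, t ∈ mT ↔ (t : K) ∈ nonunitsIn T

/-- The local ring `V` dominates the local ring `S` (as subrings of `K`):
`S ⊆ V` and the nonunits (= maximal ideal) of `V` contract to those of `S`. -/
def Dominates (S V : Subring K) : Prop :=
  S ≤ V ∧ ∀ x : K, x ∈ S → (x ∈ nonunitsIn V ↔ x ∈ nonunitsIn S)

/-- The localization of a subring `A` of `K` at a prime ideal `P`, as a subring of `K`. -/
def locAt (A : Subring K) (P : Ideal A) (hP : P.IsPrime) : Subring K where
  carrier := {x : K | ∃ a b : A, b ∉ P ∧ (b : K) * x = (a : K)}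
  zero_mem' := ⟨0, 1, fun h => hP.ne_top (Ideal.eq_top_of_isUnit_mem _ h isUnit_one), by simp⟩
  one_mem' := ⟨1, 1, fun h => hP.ne_top (Ideal.eq_top_of_isUnit_mem _ h isUnit_one), by simp⟩
  add_mem' := by
    rintro x y ⟨a₁, b₁, hb₁, h₁⟩ ⟨a₂, b₂, hb₂, h₂⟩
    refine ⟨a₁ * b₂ + a₂ * b₁, b₁ * b₂, fun h => ?_, ?_⟩
    · rcases hP.mem_or_mem h with h | h
      exacts [hb₁ h, hb₂ h]
    · push_cast
      linear_combination (b₂ : K) * h₁ + (b₁ : K) * h₂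
  mul_mem' := by
    rintro x y ⟨a₁, b₁, hb₁, h₁⟩ ⟨a₂, b₂, hb₂, h₂⟩
    refine ⟨a₁ * a₂, b₁ * b₂, fun h => ?_, ?_⟩
    · rcases hP.mem_or_mem h with h | h
      exacts [hb₁ h, hb₂ h]
    · push_cast
      linear_combination ((b₂ : K) * y) * h₁ + (a₁ : K) * h₂
  neg_mem' := by
    rintro x ⟨a, b, hb, h⟩
    exact ⟨-a, b, hb, by push_cast; linear_combination -h⟩

/-- The chart `R[I/a]`: the subring of `K` generated by `R` and the fractions `u/a`, `u ∈ I`. -/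
def chart (R : Subring K) (I : Ideal R) (a : R) : Subring K :=
  Subring.closure ((R : Set K) ∪ {x : K | ∃ u : R, u ∈ I ∧ x = (u : K) / (a : K)})

/-- The integral closure of a subring of `K` in `K`, as a subring of `K`. -/
def intCl (A : Subring K) : Subring K := (integralClosure A K).toSubring

/-- The chart `A_a = overline{R[I/a]}` of the normalized blowup of `I`. -/
def normChart (R : Subring K) (I : Ideal R) (a : R) : Subring K :=
  intCl (chart R I a)

/-- The ideal `P` of `A` lies over the ideal `m` of `R` (i.e. `P ∩ R = m`). -/
def LiesOver (A : Subring K) (P : Ideal A) (R : Subring K) (m : Ideal R) : Prop :=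
  ∀ r : R, ((r : K) ∈ Subtype.val '' (P : Set A)) ↔ r ∈ m

/-- `S` is a local ring of the normalized blowup `Proj overline{R[It]}`,
i.e. `S = (A_a)_P` for some nonzero `a ∈ I` and prime `P` of `A_a`. -/
def IsBlowupPoint (R : Subring K) (I : Ideal R) (S : Subring K) : Prop :=
  ∃ a : R, a ≠ 0 ∧ a ∈ I ∧ ∃ (P : Ideal (normChart R I a)) (hP : P.IsPrime),
    S = locAt (normChart R I a) P hP

/-- `S` is a local ring of the normalized blowup `Proj overline{R[It]}` dominating `R`,
i.e. `S = (A_a)_P` for some nonzero `a ∈ I` and prime `P` of `A_a` with `P ∩ R = m`. -/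
def IsBlowupLocalRing (R : Subring K) (I m : Ideal R) (S : Subring K) : Prop :=
  ∃ a : R, a ≠ 0 ∧ a ∈ I ∧ ∃ (P : Ideal (normChart R I a)) (hP : P.IsPrime),
    LiesOver (normChart R I a) P R m ∧ S = locAt (normChart R I a) P hP

/-- The set of Rees valuation rings of `I`: DVRs of the form `(A_a)_P` with `P ∩ R = m`. -/
def reesSet (R : Subring K) (m I : Ideal R) : Set (Subring K) :=
  {V | IsDiscreteValuationRing V ∧ ∃ a : R, a ≠ 0 ∧ a ∈ I ∧
    ∃ (P : Ideal (normChart R I a)) (hP : P.IsPrime),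
      LiesOver (normChart R I a) P R m ∧ V = locAt (normChart R I a) P hP}

/-- The `mT`-adic order of an element `t` of `T`. -/
noncomputable def ordfn (T : Subring K) (mT : Ideal T) (t : T) : ℕ :=
  sSup {n : ℕ | t ∈ mT ^ n}

/-- `V` is the order valuation ring of the (regular) local ring `(T, mT)`:
the discrete valuation ring consisting of `0` and all fractions `a/b` of elements
of `T` with `ord a ≥ ord b`. -/
def IsOrdValRing (T : Subring K) (mT : Ideal T) (V : Subring K) : Prop :=
  IsDiscreteValuationRing V ∧ T ≤ V ∧
    ∀ x : K, x ∈ V ↔ (x = 0 ∨ ∃ a b : T, b ≠ 0 ∧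
      ordfn T mT b ≤ ordfn T mT a ∧ x = (a : K) / (b : K))

/-- The extension `I·S` of an ideal `I` of `R` to an overring `S` (subrings of `K`). -/
def extIdeal (R S : Subring K) (I : Ideal R) : Ideal S :=
  Ideal.span {s : S | (s : K) ∈ Subtype.val '' (I : Set R)}

/-- `J` is the transform `I^S` of the ideal `I` of `R` in `S`: `J = a⁻¹(IS)` where
`aS` is the smallest principal ideal of `S` containing `IS`. -/
def IsIdealTransform (R S : Subring K) (I : Ideal R) (J : Ideal S) : Prop :=
  ∃ a : S, extIdeal R S I ≤ Ideal.span {a} ∧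
    (∀ b : S, extIdeal R S I ≤ Ideal.span {b} → Ideal.span {a} ≤ Ideal.span {b}) ∧
    ∀ s : S, s ∈ J ↔ a * s ∈ extIdeal R S I

/-- `T'` is a local quadratic transform of the regular local ring `T`:
`T' = (T[m_T/x])_Q` for some `x ∈ m_T \ m_T²` and prime `Q` of `T[m_T/x]` lying over `m_T`. -/
def IsQuadraticTransform (T T' : Subring K) : Prop :=
  IsRegularLocal T ∧ ∃ (mT : Ideal T) (x : T), IsMaxIdeal T mT ∧ x ∈ mT ∧ x ∉ mT ^ 2 ∧
    ∃ (Q : Ideal (chart T mT x)) (hQ : Q.IsPrime),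
      LiesOver (chart T mT x) Q T mT ∧ T' = locAt (chart T mT x) Q hQ

/-- `S` is infinitely near to `R`: `dim S ≥ 2` and `S` is obtained from `R` by a finite
(possibly empty) sequence of local quadratic transforms. -/
def InfinitelyNear (R S : Subring K) : Prop :=
  Relation.ReflTransGen (IsQuadraticTransform (K := K)) R S ∧
    2 ≤ ringKrullDim S

/-- `S` is a base point of the ideal `I` of `R`: `S` is obtained from `R` by a finite
sequence of local quadratic transforms and the transform `I^S` is a proper ideal of `S`. -/
def IsBasePoint (R : Subring K) (I : Ideal R) (S : Subring K) : Prop :=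
  Relation.ReflTransGen (IsQuadraticTransform (K := K)) R S ∧
    ∃ J : Ideal S, IsIdealTransform R S I J ∧ J ≠ ⊤

/-- The ideal `I` of `R` is finitely supported: it has only finitely many base points. -/
def FinitelySupported (R : Subring K) (I : Ideal R) : Prop :=
  {S : Subring K | IsBasePoint R I S}.Finite

/-- The ideal `I` is `m`-primary. -/
def IsPrimaryFor (R : Subring K) (I m : Ideal R) : Prop :=
  I.IsPrimary ∧ I.radical = m

/-- The function `v` on (nonzero elements of) `K` is an additive valuation
extending the `mT`-adic order function of `T`. -/
def IsOrderValuation (T : Subring K) (mT : Ideal T) (v : K → ℤ) : Prop :=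
  (∀ x y : K, x ≠ 0 → y ≠ 0 → v (x * y) = v x + v y) ∧
  (∀ x y : K, x ≠ 0 → y ≠ 0 → x + y ≠ 0 → min (v x) (v y) ≤ v (x + y)) ∧
  (∀ t : T, (t : K) ≠ 0 → v (t : K) = ordfn T mT t)

end Blowup


namespace BlowupAux

open Blowup

variable {K : Type*} [Field K]

theorem mem_nonunitsIn_iff {T : Subring K} (x : T) :
    (x : K) ∈ nonunitsIn T ↔ ¬ IsUnit x := by
  constructor
  · rintro ⟨-, h⟩ hu
    obtain ⟨y, hy⟩ := isUnit_iff_exists_inv.mp hu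
    have hK : (x : K) * (y : K) = 1 := by exact_mod_cast congrArg Subtype.val hy
    have hx0 : (x : K) ≠ 0 := by
      intro h0; rw [h0, zero_mul] at hK; exact zero_ne_one hK
    rcases h with h | h
    · exact hx0 h
    · exact h ((eq_inv_of_mul_eq_one_left (by rw [mul_comm] at hK; exact hK)).symm ▸ y.2)
  · intro hnu
    refine ⟨x.2, ?_⟩
    by_cases h0 : (x : K) = 0
    · exact Or.inl h0
    · refine Or.inr fun hinv => hnu ?_
      refine IsUnit.of_mul_eq_one (a := x) ⟨(x : K)⁻¹, hinv⟩ (Subtype.ext ?_)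
      exact mul_inv_cancel₀ h0

theorem extIdeal_eq_map {R T : Subring K} (h : R ≤ T) (J : Ideal R) :
    extIdeal R T J = J.map (Subring.inclusion h) := by
  have hset : {s : T | (s : K) ∈ Subtype.val '' (J : Set R)} =
      (Subring.inclusion h) '' (J : Set R) := by
    ext s
    simp only [Set.mem_image, Set.mem_setOf_eq]
    constructor
    · rintro ⟨r, hr, hrs⟩
      exact ⟨r, hr, Subtype.ext hrs⟩
    · rintro ⟨r, hr, rfl⟩
      exact ⟨r, hr, rfl⟩
  rw [extIdeal, hset]
  rfl

end BlowupAux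

open Blowup in
/-- (Lemma 2.10) Let `S` be a local ring of the normalized blowup of an
`m`-primary ideal `I` dominating `R`. If `S` is a UFD and there is a DVR `V` dominating
`S` such that `mV` is the maximal ideal of `V`, then `mS` is principal. -/
theorem statement2 {K : Type*} [Field K] (R : Subring K)
    (hreg : IsRegularLocal R) (hfrac : IsFractionRing R K)
    (m : Ideal R) (hm : IsMaxIdeal R m)
    (I : Ideal R) (hprim : IsPrimaryFor R I m)
    (S : Subring K) (hS : IsBlowupLocalRing R I m S)
    (hUFD : UniqueFactorizationMonoid S)
    (V : Subring K) (hVdvr : IsDiscreteValuationRing V)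
    (hdom : Dominates S V)
    (hmV : ∀ v : V, v ∈ extIdeal R V m ↔ (v : K) ∈ nonunitsIn V) :
    (extIdeal R S m).IsPrincipal := by
  classical
  haveI := hUFD
  haveI := hVdvr
  haveI : IsNoetherianRing R := hreg.1
  obtain ⟨a, ha0, haI, P, hP, hlies, hSeq⟩ := hS
  have hRchart : R ≤ chart R I a := fun x hx => Subring.subset_closure (Or.inl hx)
  have hchartN : chart R I a ≤ normChart R I a := fun x hx =>
    Subalgebra.mem_toSubring.mpr (Subalgebra.algebraMap_mem _ (⟨x, hx⟩ : chart R I a))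
  have hNS : normChart R I a ≤ S := by
    rw [hSeq]
    intro x hx
    exact ⟨⟨x, hx⟩, 1, fun h => hP.ne_top (Ideal.eq_top_of_isUnit_mem _ h isUnit_one), by simp⟩
  have hRS : R ≤ S := le_trans (le_trans hRchart hchartN) hNS
  have hSV : S ≤ V := hdom.1
  have hRV : R ≤ V := le_trans hRS hSV
  set φ : R →+* S := Subring.inclusion hRS with hφ
  set ψ : S →+* V := Subring.inclusion hSV with hψ
  have hmapS : extIdeal R S m = m.map φ := BlowupAux.extIdeal_eq_map hRS m
  have hmapV : extIdeal R V m = m.map (Subring.inclusion hRV) := BlowupAux.extIdeal_eq_map hRV m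
  by_cases hbot : m = ⊥
  · refine ⟨⟨0, ?_⟩⟩
    rw [hmapS, hbot, Ideal.map_bot]
    exact (Ideal.span_singleton_eq_bot.mpr rfl).symm
  obtain ⟨s, hs⟩ : m.FG := IsNoetherian.noetherian m
  set s' : Finset R := s.erase 0 with hs'def
  have hsub1 : (s : Set R) ⊆ insert 0 (s' : Set R) := by
    intro x hx
    by_cases hx0 : x = 0
    · rw [hx0]; exact Set.mem_insert 0 _
    · exact Set.mem_insert_of_mem _ (Finset.mem_coe.mpr (Finset.mem_erase.mpr ⟨hx0, hx⟩))
  have hspan' : Ideal.span (s' : Set R) = m := by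
    refine le_antisymm ?_ ?_
    · rw [← hs]
      exact Ideal.span_mono (by intro x hx; exact Finset.mem_coe.mpr (Finset.mem_of_mem_erase hx))
    · rw [← hs]
      refine le_trans (Ideal.span_mono hsub1) ?_
      rw [show Ideal.span (insert 0 (s' : Set R)) = Ideal.span (s' : Set R) from
        Submodule.span_insert_zero]
  have hs'ne : s'.Nonempty := by
    rcases Finset.eq_empty_or_nonempty s' with h | h
    · exfalso; apply hbot; rw [← hspan', h]; simp
    · exact h
  set t : Finset S := s'.image φ with htdef
  have htne : t.Nonempty := hs'ne.image φ
  have ht0 : ∀ u ∈ t, u ≠ 0 := by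
    intro u hu h0
    obtain ⟨r, hr, rfl⟩ := Finset.mem_image.mp hu
    have hr0 : r ≠ 0 := Finset.ne_of_mem_erase hr
    exact hr0 (Subtype.ext (show (r : K) = 0 from congrArg Subtype.val h0))
  letI : NormalizationMonoid S := (UniqueFactorizationMonoid.normalizationMonoid : StrongNormalizationMonoid S).toNormalizationMonoid
  letI : NormalizedGCDMonoid S := UniqueFactorizationMonoid.toNormalizedGCDMonoid S
  set d : S := t.gcd id with hddef
  have hd0 : d ≠ 0 := by
    rw [hddef, Ne, Finset.gcd_eq_zero_iff]
    push_neg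
    obtain ⟨u, hu⟩ := htne
    exact ⟨u, hu, ht0 u hu⟩
  have hdvd : ∀ u ∈ t, d ∣ u := fun u hu => Finset.gcd_dvd hu
  have hwex : ∀ u ∈ t, ∃ c, u = d * c := fun u hu => hdvd u hu
  choose! w hwspec using hwex
  have hmS : extIdeal R S m = Ideal.span (t : Set S) := by
    rw [hmapS, ← hspan', Ideal.map_span, htdef, Finset.coe_image]
  by_cases hcase : ∃ u ∈ t, IsUnit (w u)
  · obtain ⟨u, hu, hwu⟩ := hcase
    refine ⟨⟨d, ?_⟩⟩
    rw [hmS]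
    refine le_antisymm ?_ ?_
    · rw [Ideal.span_le]
      intro x hx
      exact Ideal.mem_span_singleton.mpr ⟨w x, hwspec x (Finset.mem_coe.mp hx)⟩
    · rw [Submodule.span_le, Set.singleton_subset_iff]
      obtain ⟨v, hv⟩ := hwu
      have hdu : d = u * ↑v⁻¹ := by
        rw [hwspec u hu, ← hv, mul_assoc]
        simp
      rw [hdu]
      exact Ideal.mul_mem_right _ _ (Ideal.subset_span (Finset.mem_coe.mpr hu))
  · exfalso
    push_neg at hcase
    have hw0 : ∀ u ∈ t, w u ≠ 0 := fun u hu h =>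
      ht0 u hu (by rw [hwspec u hu, h, mul_zero])
    have hwV : ∀ u ∈ t, ¬ IsUnit (ψ (w u)) := by
      intro u hu
      have h1 : (w u : K) ∈ nonunitsIn S :=
        (BlowupAux.mem_nonunitsIn_iff (w u)).mpr (hcase u hu)
      have h2 : (w u : K) ∈ nonunitsIn V := (hdom.2 _ (w u).2).mpr h1
      exact (BlowupAux.mem_nonunitsIn_iff (ψ (w u))).mp h2
    have hcomp : ψ.comp φ = Subring.inclusion hRV := by
      ext r
      rfl
    have hNV : extIdeal R V m = (extIdeal R S m).map ψ := by
      rw [hmapV, hmapS, Ideal.map_map, hcomp]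
    have hNmax : extIdeal R V m = IsLocalRing.maximalIdeal V := by
      ext v
      rw [hmV v, BlowupAux.mem_nonunitsIn_iff, IsLocalRing.mem_maximalIdeal, mem_nonunits_iff]
    have hle : IsLocalRing.maximalIdeal V ≤
        Ideal.span {ψ d} * IsLocalRing.maximalIdeal V := by
      conv_lhs => rw [← hNmax, hNV, hmS, Ideal.map_span]
      rw [Ideal.span_le]
      rintro x ⟨u, hu, rfl⟩
      have hu' : u ∈ t := Finset.mem_coe.mp hu
      have heq : ψ u = ψ d * ψ (w u) := by
        rw [← map_mul]; exact congrArg ψ (hwspec u hu')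
      rw [SetLike.mem_coe, heq]
      exact Ideal.mul_mem_mul (Ideal.mem_span_singleton_self _)
        ((IsLocalRing.mem_maximalIdeal _).mpr (mem_nonunits_iff.mpr (hwV u hu')))
    obtain ⟨⟨π, hπ⟩⟩ := IsPrincipalIdealRing.principal (IsLocalRing.maximalIdeal V)
    have hπ0 : π ≠ 0 := by
      intro h
      apply IsDiscreteValuationRing.not_a_field V
      rw [hπ, h]
      exact Submodule.span_singleton_eq_bot.mpr rfl
    have hπmem : π ∈ Ideal.span {ψ d} * IsLocalRing.maximalIdeal V := by
      apply hle
      rw [hπ]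
      exact Ideal.mem_span_singleton_self π
    obtain ⟨y, hyM, hy⟩ := Ideal.mem_span_singleton_mul.mp hπmem
    rw [hπ] at hyM
    obtain ⟨c, hc⟩ := Submodule.mem_span_singleton.mp hyM
    have hunit : IsUnit (ψ d) := by
      have h1 : (ψ d * c) * π = 1 * π := by
        have hc' : c * π = y := by rw [← smul_eq_mul]; exact hc
        rw [one_mul, mul_assoc, hc', hy]
      exact IsUnit.of_mul_eq_one c (mul_right_cancel₀ hπ0 h1)
    have hdS : IsUnit d := by
      by_contra hns
      have h1 : (d : K) ∈ nonunitsIn S := (BlowupAux.mem_nonunitsIn_iff d).mpr hns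
      have h2 : (d : K) ∈ nonunitsIn V := (hdom.2 _ d.2).mpr h1
      exact (BlowupAux.mem_nonunitsIn_iff (ψ d)).mp h2 hunit
    have haK0 : (a : K) ≠ 0 := fun h => ha0 (Subtype.ext h)
    set abar : S := ⟨(a : K), hRS a.2⟩ with habardef
    have habar0 : abar ≠ 0 := fun h => ha0 (Subtype.ext (show (a : K) = 0 from congrArg Subtype.val h))
    have haIm : a ∈ m := hprim.2 ▸ Ideal.le_radical haI
    have habarV : (a : K) ∈ nonunitsIn V := by
      have h1 : Subring.inclusion hRV a ∈ extIdeal R V m := by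
        rw [hmapV]
        exact Ideal.mem_map_of_mem _ haIm
      exact (hmV _).mp h1
    have habarnu : ¬ IsUnit abar := by
      have h1 : (a : K) ∈ nonunitsIn S := (hdom.2 _ (hRS a.2)).mp habarV
      exact (BlowupAux.mem_nonunitsIn_iff abar).mp h1
    obtain ⟨p, hpirr, hpdvd⟩ := WfDvdMonoid.exists_irreducible_factor habarnu habar0
    have hpprime : Prime p := UniqueFactorizationMonoid.irreducible_iff_prime.mp hpirr
    have hfg : I.radical.FG := by
      rw [hprim.2]
      exact IsNoetherian.noetherian m
    obtain ⟨n, hn⟩ := Ideal.exists_radical_pow_le_of_fg I hfg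
    rw [hprim.2] at hn
    have hIS : extIdeal R S m ^ n ≤ Ideal.span {abar} := by
      rw [hmapS, ← Ideal.map_pow]
      refine le_trans (Ideal.map_mono hn) ?_
      rw [Ideal.map_le_iff_le_comap]
      intro r hr
      rw [Ideal.mem_comap, Ideal.mem_span_singleton]
      refine ⟨⟨(r : K) / (a : K),
        hNS (hchartN (Subring.subset_closure (Or.inr ⟨r, hr, rfl⟩)))⟩, ?_⟩
      refine Subtype.ext ?_
      show (r : K) = (a : K) * ((r : K) / (a : K))
      field_simp
    have hpd : ∀ u ∈ t, p * d ∣ u := by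
      intro u hu
      obtain ⟨e, he⟩ := hdS
      have humem : u ∈ extIdeal R S m := by
        rw [hmS]
        exact Ideal.subset_span (Finset.mem_coe.mpr hu)
      have hwmem : w u ∈ extIdeal R S m := by
        have h2 : u = ↑e * w u := by rw [he]; exact hwspec u hu
        have heq : w u = ↑e⁻¹ * u := by
          conv_rhs => rw [h2]
          rw [← mul_assoc, Units.inv_mul, one_mul]
        rw [heq]
        exact Ideal.mul_mem_left _ _ humem
      have hpow : (w u) ^ n ∈ Ideal.span {abar} := hIS (Ideal.pow_mem_pow hwmem n)
      have hdvd1 : p ∣ (w u) ^ n := dvd_trans hpdvd (Ideal.mem_span_singleton.mp hpow)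
      obtain ⟨z, hz⟩ := hpprime.dvd_of_dvd_pow hdvd1
      refine ⟨z, ?_⟩
      conv_lhs => rw [hwspec u hu, hz]
      ring
    obtain ⟨z, hz⟩ := Finset.dvd_gcd hpd
    have h1 : d * 1 = d * (p * z) := by
      rw [mul_one]
      calc d = p * d * z := hz
      _ = d * (p * z) := by ring
    exact hpprime.not_unit (IsUnit.of_mul_eq_one (a := p) z (mul_left_cancel₀ hd0 h1).symm)
end

section
/- Let (R, m) be a regular local ring that is an integral domain with fraction field K, let V = ord_R be the order valuation ring of R, and let I be an m-primary ideal of R. Let S = (A_a)_P be a local ring of Proj(overline(R[It])) that is dominated by V, i.e., S ⊆ V and m_V ∩ S = m_S. If S is a unique factorization domain, then S = V; in particular, V is a Rees valuation ring of I. -/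
open Blowup in
/-- (Corollary 2.11) Let `V = ord_R` be the order valuation ring of `R`
and `I` an `m`-primary ideal. If the local ring `S` of the normalized blowup dominated by
`V` is a UFD, then `S = V`; in particular `V` is a Rees valuation ring of `I`. -/
theorem statement3 {K : Type*} [Field K] (R : Subring K)
    (hreg : IsRegularLocal R) (hfrac : IsFractionRing R K)
    (m : Ideal R) (hm : IsMaxIdeal R m)
    (V : Subring K) (hV : IsOrdValRing R m V)
    (I : Ideal R) (hprim : IsPrimaryFor R I m)
    (S : Subring K) (hS : IsBlowupPoint R I S) (hdom : Dominates S V)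
    (hUFD : UniqueFactorizationMonoid S) :
    S = V ∧ V ∈ reesSet R m I := by
  classical
  obtain ⟨hNoeth, -⟩ := hreg
  haveI : IsNoetherianRing ↥R := hNoeth
  obtain ⟨hDVR, hRV, hVmem⟩ := hV
  obtain ⟨-, hrad⟩ := hprim
  obtain ⟨a, ha0, haI, P, hP, hSeq⟩ := hS
  obtain ⟨hSV, hdomiff⟩ := hdom
  -- basic coercion helpers
  have hcoe0 : ∀ r : ↥R, r ≠ 0 → (r : K) ≠ 0 := fun r hr h => hr (Subtype.ext h)
  -- `m` is a proper ideal
  have h1m : (1 : ↥R) ∉ m := by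
    intro h1
    have h := (hm 1).mp h1
    rcases h.2 with h0 | hinv
    · exact one_ne_zero (α := K) (by simpa using h0)
    · exact hinv (by simpa using R.one_mem)
  have hmtop : m ≠ ⊤ := fun h => h1m (h ▸ Submodule.mem_top)
  -- Krull intersection theorem
  have hKrullbot : (⨅ i : ℕ, m ^ i) = ⊥ := Ideal.iInf_pow_eq_bot_of_isDomain m hmtop
  have hbdd : ∀ r : ↥R, r ≠ 0 → BddAbove {n : ℕ | r ∈ m ^ n} := by
    intro r hr
    by_contra hub
    have hall : ∀ N : ℕ, r ∈ m ^ N := by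
      intro N
      obtain ⟨n, hn, hlt⟩ := not_bddAbove_iff.mp hub N
      exact Ideal.pow_le_pow_right hlt.le hn
    have hmem : r ∈ (⨅ i : ℕ, m ^ i) := (Submodule.mem_iInf _).mpr hall
    rw [hKrullbot] at hmem
    exact hr ((Submodule.mem_bot _).mp hmem)
  -- order function basics
  have hord_mem : ∀ r : ↥R, r ≠ 0 → r ∈ m ^ (ordfn R m r) := by
    intro r hr
    have hne : {n : ℕ | r ∈ m ^ n}.Nonempty := ⟨0, by simp⟩
    exact Nat.sSup_mem hne (hbdd r hr)
  have hord_le : ∀ (r : ↥R) (n : ℕ), r ≠ 0 → r ∈ m ^ n → n ≤ ordfn R m r :=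
    fun r n hr hm' => le_csSup (hbdd r hr) hm'
  have hord_add : ∀ r s : ↥R, r ≠ 0 → s ≠ 0 →
      ordfn R m r + ordfn R m s ≤ ordfn R m (r * s) := by
    intro r s hr hs
    exact hord_le _ _ (mul_ne_zero hr hs)
      (by rw [pow_add]; exact Ideal.mul_mem_mul (hord_mem r hr) (hord_mem s hs))
  have hord_one : ∀ r : ↥R, r ∈ m → r ≠ 0 → 1 ≤ ordfn R m r :=
    fun r hrm hr => hord_le r 1 hr (by rwa [pow_one])
  have hord_powx : ∀ (r : ↥R) (n : ℕ), r ≠ 0 → r ∈ m → n ≤ ordfn R m (r ^ n) := by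
    intro r n hr hrm
    induction n with
    | zero => simp
    | succ k ih =>
      calc k + 1 ≤ ordfn R m (r ^ k) + ordfn R m r := add_le_add ih (hord_one r hrm hr)
        _ ≤ ordfn R m (r ^ k * r) := hord_add _ _ (pow_ne_zero _ hr) hr
        _ = ordfn R m (r ^ (k + 1)) := by rw [← pow_succ]
  -- a ∈ m
  have ham : a ∈ m := hrad ▸ Ideal.le_radical haI
  -- existence of x ∈ m \ m²
  have hm2 : ∃ x : ↥R, x ∈ m ∧ x ∉ m ^ 2 := by
    by_contra hc
    push_neg at hc
    have hle : m ≤ m ^ 2 := fun y hy => hc y hy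
    have hpow : ∀ n : ℕ, m ≤ m ^ (n + 1) := by
      intro n
      induction n with
      | zero => simpa using le_rfl
      | succ k ih =>
        calc m ≤ m ^ 2 := hle
          _ = m * m := sq m
          _ ≤ m * m ^ (k + 1) := Ideal.mul_mono_right ih
          _ = m ^ (k + 2) := (pow_succ' m (k + 1)).symm
    have hmem : a ∈ (⨅ i : ℕ, m ^ i) := by
      refine (Submodule.mem_iInf _).mpr fun i => ?_
      cases i with
      | zero => simp
      | succ k => exact hpow k ham
    rw [hKrullbot] at hmem
    exact ha0 ((Submodule.mem_bot _).mp hmem)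
  obtain ⟨x, hxm, hxm2⟩ := hm2
  have hx0 : x ≠ 0 := fun h => hxm2 (h ▸ (m ^ 2).zero_mem)
  have hxK0 : (x : K) ≠ 0 := hcoe0 x hx0
  have hordx : ordfn R m x = 1 := by
    refine le_antisymm ?_ (hord_one x hxm hx0)
    refine csSup_le ⟨0, by simp⟩ ?_
    intro n hn
    by_contra hlt
    push_neg at hlt
    exact hxm2 (Ideal.pow_le_pow_right hlt hn)
  -- membership of R in V
  have hmK : ∀ r : ↥R, (r : K) ∈ V := fun r => hRV r.2
  -- elements of m are nonunits of V
  have hinv_notV : ∀ r : ↥R, r ∈ m → r ≠ 0 → ((r : K))⁻¹ ∉ V := by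
    intro r hrm hr0 hinv
    have hrK : (r : K) ≠ 0 := hcoe0 r hr0
    rcases (hVmem _).mp hinv with h0 | ⟨y, z, hz0, hle, heq⟩
    · exact inv_ne_zero hrK h0
    · have hzK : (z : K) ≠ 0 := hcoe0 z hz0
      have hyK : (y : K) ≠ 0 := by
        intro h
        rw [h, zero_div] at heq
        exact inv_ne_zero hrK heq
      have hy0 : y ≠ 0 := fun h => hyK (by rw [h]; exact ZeroMemClass.coe_zero R)
      have h4 : (r : K) = (z : K) / (y : K) := by
        have := congrArg Inv.inv heq
        rwa [inv_inv, inv_div] at this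
      have h3 : (z : K) = (y : K) * (r : K) := by rw [h4]; field_simp
      have hzyr : z = y * r := Subtype.ext (by push_cast; exact h3)
      have h5 : ordfn R m y + 1 ≤ ordfn R m z := by
        rw [hzyr]
        calc ordfn R m y + 1 ≤ ordfn R m y + ordfn R m r := by
              have := hord_one r hrm hr0; omega
          _ ≤ ordfn R m (y * r) := hord_add y r hy0 hr0
      omega
  -- divisibility in V from the order function
  have hdvdV : ∀ r r' : ↥R, r ≠ 0 → r' ≠ 0 → ordfn R m r ≤ ordfn R m r' →
      ∃ v : K, v ∈ V ∧ (r' : K) = (r : K) * v := by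
    intro r r' hr hr' hle
    refine ⟨(r' : K) / (r : K), (hVmem _).mpr (Or.inr ⟨r', r, hr, hle, rfl⟩), ?_⟩
    rw [mul_comm, div_mul_cancel₀ _ (hcoe0 r hr)]
  -- x-power divisibility in V
  have hmapV : Ideal.map (Subring.inclusion hRV) m ≤ Ideal.span {(⟨(x : K), hmK x⟩ : ↥V)} := by
    rw [Ideal.map_le_iff_le_comap]
    intro y hy
    rw [Ideal.mem_comap, Ideal.mem_span_singleton]
    by_cases hy0 : y = 0
    · rw [hy0, map_zero]; exact dvd_zero _
    · obtain ⟨v, hvV, hveq⟩ := hdvdV x y hx0 hy0 (by rw [hordx]; exact hord_one y hy hy0)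
      exact ⟨⟨v, hvV⟩, Subtype.ext (by push_cast; exact hveq)⟩
  have hdvd_powV : ∀ (r : ↥R) (n : ℕ), r ∈ m ^ n →
      ∃ v : K, v ∈ V ∧ (r : K) = (x : K) ^ n * v := by
    intro r n hrn
    have h1 : (Subring.inclusion hRV) r ∈ Ideal.map (Subring.inclusion hRV) (m ^ n) :=
      Ideal.mem_map_of_mem _ hrn
    rw [Ideal.map_pow] at h1
    have h2 : (Subring.inclusion hRV) r ∈ Ideal.span {(⟨(x : K), hmK x⟩ : ↥V) ^ n} := by
      rw [← Ideal.span_singleton_pow]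
      exact Ideal.pow_right_mono hmapV _ h1
    rw [Ideal.mem_span_singleton] at h2
    obtain ⟨v, hv⟩ := h2
    refine ⟨(v : K), v.2, ?_⟩
    have hc := congrArg Subtype.val hv
    push_cast at hc
    exact hc
  -- structure of elements of R in V : r = x^(ord r) * unit
  have hRstruct : ∀ r : ↥R, r ≠ 0 →
      ∃ w : K, w ∈ V ∧ w⁻¹ ∈ V ∧ (r : K) = (x : K) ^ (ordfn R m r) * w := by
    intro r hr
    obtain ⟨w, hwV, hweq⟩ := hdvd_powV r (ordfn R m r) (hord_mem r hr)
    refine ⟨w, hwV, ?_, hweq⟩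
    have hxnr : ((x ^ (ordfn R m r) : ↥R) : K) / (r : K) ∈ V :=
      (hVmem _).mpr (Or.inr ⟨x ^ (ordfn R m r), r, hr,
        hord_powx x (ordfn R m r) hx0 hxm, rfl⟩)
    have hrK : (r : K) ≠ 0 := hcoe0 r hr
    have hw : w⁻¹ = ((x ^ (ordfn R m r) : ↥R) : K) / (r : K) := by
      push_cast
      rw [hweq]
      have hxn : (x : K) ^ (ordfn R m r) ≠ 0 := pow_ne_zero _ hxK0
      have hw0 : w ≠ 0 := by
        intro h
        rw [h, mul_zero] at hweq
        exact hrK hweq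
      field_simp
    rw [hw]; exact hxnr
  -- structure of elements of V : ξ = x^k * unit
  have hVstruct : ∀ ξ : K, ξ ∈ V → ξ ≠ 0 →
      ∃ (k : ℕ) (w : K), w ∈ V ∧ w⁻¹ ∈ V ∧ ξ = (x : K) ^ k * w := by
    intro ξ hξV hξ0
    rcases (hVmem ξ).mp hξV with h0 | ⟨y, z, hz0, hle, heq⟩
    · exact absurd h0 hξ0
    have hzK : (z : K) ≠ 0 := hcoe0 z hz0
    have hyK : (y : K) ≠ 0 := by
      intro h
      rw [h, zero_div] at heq
      exact hξ0 heq
    have hy0 : y ≠ 0 := fun h => hyK (by rw [h]; exact ZeroMemClass.coe_zero R)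
    obtain ⟨wy, hwyV, hwyi, hyeq⟩ := hRstruct y hy0
    obtain ⟨wz, hwzV, hwzi, hzeq⟩ := hRstruct z hz0
    obtain ⟨k, hk⟩ := Nat.exists_eq_add_of_le hle
    have hwz0 : wz ≠ 0 := by
      intro h
      rw [h, mul_zero] at hzeq
      exact hzK hzeq
    refine ⟨k, wy * wz⁻¹, V.mul_mem hwyV hwzi,
      by rw [mul_inv, inv_inv]; exact V.mul_mem hwyi hwzV, ?_⟩
    rw [heq, hyeq, hzeq, hk, pow_add]
    have hxz : (x : K) ^ (ordfn R m z) ≠ 0 := pow_ne_zero _ hxK0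
    field_simp
  -- the chart and its closure sit inside S
  have hRchart : (R : Set K) ⊆ ↑(chart R I a) :=
    fun r hr => Subring.subset_closure (Or.inl hr)
  have hchartA : chart R I a ≤ normChart R I a := by
    intro z hz
    exact Subalgebra.mem_toSubring.mpr (isIntegral_algebraMap (x := (⟨z, hz⟩ : ↥(chart R I a))))
  have hmemS : ∀ ξ : K, ξ ∈ S ↔
      ∃ α β : ↥(normChart R I a), β ∉ P ∧ (β : K) * ξ = (α : K) := by
    intro ξ; rw [hSeq]; exact Iff.rfl
  have h1P : (1 : ↥(normChart R I a)) ∉ P :=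
    fun h => hP.ne_top ((Ideal.eq_top_iff_one P).mpr h)
  have hAS : ∀ ξ : K, ξ ∈ normChart R I a → ξ ∈ S :=
    fun ξ hξ => (hmemS ξ).mpr ⟨⟨ξ, hξ⟩, 1, h1P, by simp⟩
  have hRleS : R ≤ S := fun ξ hξ => hAS ξ (hchartA (hRchart hξ))
  have hRS : ∀ r : ↥R, (r : K) ∈ S := fun r => hRleS r.2
  have hfracS : ∀ u : ↥R, u ∈ I → (u : K) / (a : K) ∈ S :=
    fun u hu => hAS _ (hchartA (Subring.subset_closure (Or.inr ⟨u, hu, rfl⟩)))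
  -- units and nonunits of S
  have hinvS_unit : ∀ s : ↥S, (s : K)⁻¹ ∈ S → s ≠ 0 → IsUnit s := by
    intro s hinv hs0
    have hsK : (s : K) ≠ 0 := fun h => hs0 (Subtype.ext h)
    exact IsUnit.of_mul_eq_one (a := s) ⟨(s : K)⁻¹, hinv⟩ (Subtype.ext (by push_cast; field_simp))
  have hunit_invS : ∀ s : ↥S, IsUnit s → (s : K)⁻¹ ∈ S := by
    intro s hs
    obtain ⟨t, ht⟩ := isUnit_iff_exists_inv.mp hs
    have hst : (s : K) * (t : K) = 1 := by exact_mod_cast congrArg Subtype.val ht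
    rw [inv_eq_of_mul_eq_one_right hst]
    exact t.2
  have hnonunit_V : ∀ s : ↥S, s ≠ 0 → ¬IsUnit s → ((s : K))⁻¹ ∉ V := by
    intro s hs0 hsu
    have h1 : (s : K) ∈ nonunitsIn S := ⟨s.2, Or.inr fun hinv => hsu (hinvS_unit s hinv hs0)⟩
    have h2 := (hdomiff (s : K) s.2).mpr h1
    rcases h2.2 with h0 | h
    · exact absurd h0 (fun hh => hs0 (Subtype.ext hh))
    · exact h
  -- a is a nonzero nonunit of S, pick a prime divisor q
  have haK0 : (a : K) ≠ 0 := hcoe0 a ha0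
  have haS0 : (⟨(a : K), hRS a⟩ : ↥S) ≠ 0 := fun h => haK0 (congrArg Subtype.val h)
  have haSnu : ¬IsUnit (⟨(a : K), hRS a⟩ : ↥S) := by
    intro hu
    exact hinv_notV a ham ha0 (hSV (hunit_invS _ hu))
  obtain ⟨q, hqirr, hqdvd⟩ := WfDvdMonoid.exists_irreducible_factor haSnu haS0
  have hqprime : Prime q := UniqueFactorizationMonoid.irreducible_iff_prime.mp hqirr
  have hq0 : q ≠ 0 := hqprime.ne_zero
  have hqK0 : (q : K) ≠ 0 := fun h => hq0 (Subtype.ext h)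
  have hqnu : ¬IsUnit q := hqprime.not_unit
  have hqinvV : ((q : K))⁻¹ ∉ V := hnonunit_V q hq0 hqnu
  -- q divides every nonzero element of m (in S)
  obtain ⟨M, hM⟩ := Ideal.exists_radical_pow_le_of_fg I (IsNoetherian.noetherian _)
  have hq_m : ∀ r : ↥R, r ∈ m → r ≠ 0 → q ∣ (⟨(r : K), hRS r⟩ : ↥S) := by
    intro r hrm hr0
    have hrMI : r ^ M ∈ I := hM (Ideal.pow_mem_pow (by rwa [hrad]) M)
    have hfr : ((r : K) ^ M) / (a : K) ∈ S := by
      have := hfracS (r ^ M) hrMI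
      push_cast at this
      exact this
    have hadvd : (⟨(a : K), hRS a⟩ : ↥S) ∣ (⟨(r : K), hRS r⟩ : ↥S) ^ M := by
      refine ⟨⟨((r : K) ^ M) / (a : K), hfr⟩, ?_⟩
      apply Subtype.ext
      push_cast
      field_simp
    exact hqprime.dvd_of_dvd_pow (dvd_trans hqdvd hadvd)
  -- x = q * t with t a unit of S
  obtain ⟨t, hxt⟩ := hq_m x hxm hx0
  have hxqt : (x : K) = (q : K) * (t : K) := by
    have h := congrArg Subtype.val hxt
    push_cast at h
    exact h
  have htK0 : (t : K) ≠ 0 := by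
    intro h
    rw [h, mul_zero] at hxqt
    exact hxK0 hxqt
  have ht0 : t ≠ 0 := fun h => htK0 (congrArg Subtype.val h)
  have htu : IsUnit t := by
    by_contra htu
    obtain ⟨k1, w1, hw1V, hw1i, hq_eq⟩ := hVstruct (q : K) (hSV q.2) hqK0
    obtain ⟨k2, w2, hw2V, hw2i, ht_eq⟩ := hVstruct (t : K) (hSV t.2) htK0
    have hk1 : k1 ≠ 0 := by
      intro h
      rw [h, pow_zero, one_mul] at hq_eq
      exact hqinvV (hq_eq ▸ hw1i)
    have htinvV : ((t : K))⁻¹ ∉ V := hnonunit_V t ht0 htu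
    have hk2 : k2 ≠ 0 := by
      intro h
      rw [h, pow_zero, one_mul] at ht_eq
      exact htinvV (ht_eq ▸ hw2i)
    obtain ⟨j, hj⟩ : ∃ j, k1 + k2 = j + 2 := ⟨k1 + k2 - 2, by omega⟩
    have hxw : (x : K) = (x : K) ^ (j + 2) * (w1 * w2) := by
      rw [← hj]
      calc (x : K) = (q : K) * (t : K) := hxqt
        _ = ((x : K) ^ k1 * w1) * ((x : K) ^ k2 * w2) := by rw [← hq_eq, ← ht_eq]
        _ = (x : K) ^ (k1 + k2) * (w1 * w2) := by rw [pow_add]; ring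
    have hone : (x : K) * ((x : K) ^ j * (w1 * w2)) = 1 := by
      have h2 : (x : K) * 1 = (x : K) * ((x : K) ^ (j + 1) * (w1 * w2)) := by
        rw [mul_one]
        calc (x : K) = (x : K) ^ (j + 2) * (w1 * w2) := hxw
          _ = (x : K) * ((x : K) ^ (j + 1) * (w1 * w2)) := by ring
      have h3 := mul_left_cancel₀ hxK0 h2
      calc (x : K) * ((x : K) ^ j * (w1 * w2)) = (x : K) ^ (j + 1) * (w1 * w2) := by ring
        _ = 1 := h3.symm
    refine (hinv_notV x hxm hx0) ?_
    rw [inv_eq_of_mul_eq_one_right hone]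
    exact V.mul_mem (pow_mem (hmK x) j) (V.mul_mem hw1V hw2V)
  have htinvS : ((t : K))⁻¹ ∈ S := hunit_invS t htu
  -- q-power divisibility in S
  have hmapS : Ideal.map (Subring.inclusion hRleS) m ≤ Ideal.span {q} := by
    rw [Ideal.map_le_iff_le_comap]
    intro y hy
    rw [Ideal.mem_comap, Ideal.mem_span_singleton]
    by_cases hy0 : y = 0
    · rw [hy0, map_zero]; exact dvd_zero _
    · exact hq_m y hy hy0
  have hqpow_dvd : ∀ r : ↥R, r ≠ 0 →
      ∃ s : ↥S, (r : K) = (q : K) ^ (ordfn R m r) * (s : K) := by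
    intro r hr
    have h1 : (Subring.inclusion hRleS) r ∈
        Ideal.map (Subring.inclusion hRleS) (m ^ (ordfn R m r)) :=
      Ideal.mem_map_of_mem _ (hord_mem r hr)
    rw [Ideal.map_pow] at h1
    have h2 : (Subring.inclusion hRleS) r ∈ Ideal.span {q ^ (ordfn R m r)} := by
      rw [← Ideal.span_singleton_pow]
      exact Ideal.pow_right_mono hmapS _ h1
    rw [Ideal.mem_span_singleton] at h2
    obtain ⟨s, hs⟩ := h2
    refine ⟨s, ?_⟩
    have hc := congrArg Subtype.val hs
    push_cast at hc
    exact hc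
  -- q^(ord r + 1) does not divide r (even with a cofactor in V)
  have hq_notdvd : ∀ r : ↥R, r ≠ 0 →
      ¬∃ w : K, w ∈ V ∧ (r : K) = (q : K) ^ (ordfn R m r + 1) * w := by
    rintro r hr ⟨w, hwV, hweq⟩
    obtain ⟨wr, hwrV, hwri, hreq⟩ := hRstruct r hr
    have hrK : (r : K) ≠ 0 := hcoe0 r hr
    have hwr0 : wr ≠ 0 := by
      intro h
      rw [h, mul_zero] at hreq
      exact hrK hreq
    have hq_eq : (q : K) = (x : K) * ((t : K))⁻¹ := by
      rw [hxqt]; field_simp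
    have h1 : (x : K) ^ (ordfn R m r) * wr =
        ((x : K) * ((t : K))⁻¹) ^ (ordfn R m r + 1) * w := by
      rw [← hq_eq, ← hweq, ← hreq]
    have hone : (x : K) * (((t : K))⁻¹ ^ (ordfn R m r + 1) * w * wr⁻¹) = 1 := by
      have hxn : (x : K) ^ (ordfn R m r) ≠ 0 := pow_ne_zero _ hxK0
      have h2 : wr = (x : K) * (((t : K))⁻¹ ^ (ordfn R m r + 1) * w) := by
        apply mul_left_cancel₀ hxn
        rw [h1, mul_pow]; ring
      calc (x : K) * (((t : K))⁻¹ ^ (ordfn R m r + 1) * w * wr⁻¹)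
          = ((x : K) * (((t : K))⁻¹ ^ (ordfn R m r + 1) * w)) * wr⁻¹ := by ring
        _ = wr * wr⁻¹ := by rw [← h2]
        _ = 1 := mul_inv_cancel₀ hwr0
    refine (hinv_notV x hxm hx0) ?_
    rw [inv_eq_of_mul_eq_one_right hone]
    exact V.mul_mem (V.mul_mem (pow_mem (hSV htinvS) _) hwV) hwri
  -- main inclusion V ≤ S, hence S = V
  have hmain : S = V := by
    refine le_antisymm hSV ?_
    intro ξ hξV
    by_cases hξ0 : ξ = 0
    · rw [hξ0]; exact S.zero_mem
    rcases (hVmem ξ).mp hξV with h0 | ⟨y, z, hz0, hle, heq⟩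
    · exact absurd h0 hξ0
    have hzK : (z : K) ≠ 0 := hcoe0 z hz0
    have hyK : (y : K) ≠ 0 := by
      intro h
      rw [h, zero_div] at heq
      exact hξ0 heq
    have hy0 : y ≠ 0 := fun h => hyK (by rw [h]; exact ZeroMemClass.coe_zero R)
    obtain ⟨z', hz'⟩ := hqpow_dvd z hz0
    obtain ⟨y1, hy1⟩ := hqpow_dvd y hy0
    obtain ⟨d, hd⟩ := Nat.exists_eq_add_of_le hle
    have hy' : (y : K) = (q : K) ^ (ordfn R m z) * ((q : K) ^ d * (y1 : K)) := by
      rw [hy1, hd, pow_add]; ring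
    have hz'K0 : (z' : K) ≠ 0 := by
      intro h
      rw [h, mul_zero] at hz'
      exact hzK hz'
    -- q does not divide z' (with cofactor in V)
    have hqz' : ¬∃ w : K, w ∈ V ∧ (z' : K) = (q : K) * w := by
      rintro ⟨w, hwV, hweq⟩
      apply hq_notdvd z hz0
      refine ⟨w, hwV, ?_⟩
      rw [hz', hweq, pow_succ]; ring
    -- z' is a unit of S
    have hz'inv : ((z' : K))⁻¹ ∈ S := by
      by_contra hninv
      have h1 : (z' : K) ∈ nonunitsIn S := ⟨z'.2, Or.inr hninv⟩
      have h2 := (hdomiff _ z'.2).mpr h1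
      have hh : ((z' : K))⁻¹ ∉ V := by
        rcases h2.2 with h0 | hh
        · exact absurd h0 hz'K0
        · exact hh
      obtain ⟨k, w, hwV, hwi, hz'eq⟩ := hVstruct (z' : K) (hSV z'.2) hz'K0
      cases Nat.eq_zero_or_pos k with
      | inl hk =>
        rw [hk, pow_zero, one_mul] at hz'eq
        exact hh (hz'eq ▸ hwi)
      | inr hk =>
        apply hqz'
        obtain ⟨k', rfl⟩ : ∃ k', k = k' + 1 := ⟨k - 1, by omega⟩
        refine ⟨(t : K) * (x : K) ^ k' * w,
          V.mul_mem (V.mul_mem (hSV t.2) (pow_mem (hmK x) k')) hwV, ?_⟩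
        rw [hz'eq, hxqt, pow_succ]
        ring
    -- ξ = y' / z' ∈ S
    have hξeq : ξ = ((q : K) ^ d * (y1 : K)) * ((z' : K))⁻¹ := by
      rw [heq, hy', hz']
      have hqn : (q : K) ^ (ordfn R m z) ≠ 0 := pow_ne_zero _ hqK0
      field_simp
    rw [hξeq]
    exact S.mul_mem (S.mul_mem (pow_mem q.2 d) y1.2) hz'inv
  refine ⟨hmain, ?_⟩
  -- V is a Rees valuation ring of I
  refine ⟨hDVR, a, ha0, haI, P, hP, ?_, by rw [← hmain]; exact hSeq⟩
  intro r
  constructor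
  · rintro ⟨ζ, hζP, hζval⟩
    by_contra hrm
    have hnn : ¬((r : K) ∈ nonunitsIn R) := fun hn => hrm ((hm r).mpr hn)
    have h2 : ¬(((r : K) = 0) ∨ ((r : K))⁻¹ ∉ R) := fun hor => hnn ⟨r.2, hor⟩
    push_neg at h2
    obtain ⟨hr0, hrinv⟩ := h2
    have hrinvS : ((r : K))⁻¹ ∈ S := hRleS hrinv
    obtain ⟨α, β, hβ, hαβ⟩ := (hmemS _).mp hrinvS
    have hβαζ : β = α * ζ := by
      apply Subtype.ext
      push_cast
      rw [hζval]
      have : (β : K) = (α : K) * (r : K) := by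
        have h3 := congrArg (fun ξ : K => ξ * (r : K)) hαβ
        rw [mul_assoc, inv_mul_cancel₀ hr0, mul_one] at h3
        rw [← h3]
      exact this
    exact hβ (hβαζ ▸ Ideal.mul_mem_left P α hζP)
  · intro hrm
    by_cases hr0 : r = 0
    · refine ⟨0, P.zero_mem, ?_⟩
      rw [hr0]; simp
    · have hrA : (r : K) ∈ normChart R I a := hchartA (hRchart r.2)
      refine ⟨⟨(r : K), hrA⟩, ?_, rfl⟩
      by_contra hζP
      have hrK : (r : K) ≠ 0 := hcoe0 r hr0
      have hrinvS : ((r : K))⁻¹ ∈ S :=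
        (hmemS _).mpr ⟨1, ⟨(r : K), hrA⟩, hζP, by push_cast; field_simp⟩
      exact hinv_notV r hrm hr0 (hSV hrinvS)
end

section
/- Let (R, m_R) be a Noetherian local domain with fraction field K such that the powers of m_R define a valuation v on K, and let V = ord_R be its valuation ring. Let (S, m_S) be a local domain birationally dominating R such that V dominates S. If the powers of m_S define a valuation w on K, then w = v; in particular, the order valuation ring ord_S of S equals V. -/
open Blowup in
private lemma pow_le_val' {K : Type*} [Field K] (S : Subring K)
    (mS : Ideal S) (v : K → ℤ)
    (hadd : ∀ x y : K, x ≠ 0 → y ≠ 0 → v (x * y) = v x + v y)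
    (hmin : ∀ x y : K, x ≠ 0 → y ≠ 0 → x + y ≠ 0 → min (v x) (v y) ≤ v (x + y))
    (hpos : ∀ s : S, s ∈ mS → (s : K) ≠ 0 → 1 ≤ v (s : K))
    (hnn : ∀ s : S, (s : K) ≠ 0 → 0 ≤ v (s : K)) :
    ∀ n : ℕ, ∀ s : S, s ∈ mS ^ n → (s : K) ≠ 0 → (n : ℤ) ≤ v (s : K) := by
  intro n
  induction n with
  | zero => intro s _ hs; simpa using hnn s hs
  | succ n ih =>
    intro s hs hs0
    rw [pow_succ] at hs
    refine Submodule.mul_induction_on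
      (C := fun x : S => (x : K) ≠ 0 → ((n + 1 : ℕ) : ℤ) ≤ v (x : K)) hs ?_ ?_ hs0
    · intro a ha b hb h0
      have hab : ((a * b : S) : K) = (a : K) * (b : K) := by push_cast; ring
      rw [hab] at h0 ⊢
      have ha0 : (a : K) ≠ 0 := left_ne_zero_of_mul h0
      have hb0 : (b : K) ≠ 0 := right_ne_zero_of_mul h0
      rw [hadd _ _ ha0 hb0]
      have h1 := ih a ha ha0
      have h2 := hpos b hb hb0
      push_cast
      omega
    · intro x y hx hy h0
      have hxy : ((x + y : S) : K) = (x : K) + (y : K) := by push_cast; ring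
      rw [hxy] at h0 ⊢
      by_cases hx0 : (x : K) = 0
      · rw [hx0, zero_add] at h0 ⊢; exact hy h0
      by_cases hy0 : (y : K) = 0
      · rw [hy0, add_zero] at h0 ⊢; exact hx h0
      · exact le_trans (le_min (hx hx0) (hy hy0)) (hmin _ _ hx0 hy0 h0)

open Blowup in
/-- (Proposition 5.6) Let `(R, m_R)` be a Noetherian local domain with
fraction field `K` whose maximal-ideal powers define a valuation `v`, with valuation ring
`V = ord_R`. Let `(S, m_S)` be a local domain birationally dominating `R` that is
dominated by `V`. If the powers of `m_S` define a valuation `w`, then `w = v`; in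
particular `ord_S = V`. -/
theorem statement11 {K : Type*} [Field K] (R : Subring K)
    (hnoeth : IsNoetherianRing R) (hfracR : IsFractionRing R K)
    (mR : Ideal R) (hmR : IsMaxIdeal R mR)
    (v : K → ℤ) (hv : IsOrderValuation R mR v)
    (S : Subring K) (hRS : R ≤ S) (hfracS : IsFractionRing S K)
    (mS : Ideal S) (hmS : IsMaxIdeal S mS)
    -- `S` birationally dominates `R`: `m_R ⊆ m_S`
    (hbir : ∀ r : R, r ∈ mR → (r : K) ∈ nonunitsIn S)
    -- the valuation ring `V` of `v` contains `S` ...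
    (hSV : ∀ x : K, x ∈ S → x ≠ 0 → 0 ≤ v x)
    -- ... and dominates `S`: the maximal ideal `{v > 0}` of `V` contracts to `m_S`
    (hVdom : ∀ x : K, x ∈ S → x ≠ 0 → (0 < v x ↔ x ∈ nonunitsIn S))
    (w : K → ℤ) (hw : IsOrderValuation S mS w) :
    (∀ x : K, x ≠ 0 → w x = v x) ∧
      {x : K | x = 0 ∨ 0 ≤ w x} = {x : K | x = 0 ∨ 0 ≤ v x} := by
  obtain ⟨hvadd, hvmin, hvord⟩ := hv
  obtain ⟨hwadd, hwmin, hword⟩ := hw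
  -- v ≥ 1 on nonzero elements of mS
  have hpos : ∀ s : S, s ∈ mS → (s : K) ≠ 0 → 1 ≤ v (s : K) := by
    intro s hs h0
    have := (hVdom (s : K) s.2 h0).mpr ((hmS s).mp hs)
    omega
  have hnn : ∀ s : S, (s : K) ≠ 0 → 0 ≤ v (s : K) := fun s h0 => hSV (s : K) s.2 h0
  have key := pow_le_val' S mS v hvadd hvmin hpos hnn
  -- properties of ordfn on S
  have hordS : ∀ s : S, (s : K) ≠ 0 →
      s ∈ mS ^ (ordfn S mS s) ∧ ∀ n : ℕ, s ∈ mS ^ n → n ≤ ordfn S mS s := by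
    intro s h0
    have hbdd : BddAbove {n : ℕ | s ∈ mS ^ n} := by
      refine ⟨(v (s : K)).toNat, fun n hn => ?_⟩
      have := key n s hn h0
      omega
    have hne : {n : ℕ | s ∈ mS ^ n}.Nonempty := ⟨0, by simp⟩
    exact ⟨Nat.sSup_mem hne hbdd, fun n hn => le_csSup hbdd hn⟩
  -- w ≤ v on S
  have hwleS : ∀ s : S, (s : K) ≠ 0 → w (s : K) ≤ v (s : K) := by
    intro s h0
    rw [hword s h0]
    exact key _ s (hordS s h0).1 h0
  -- the inclusion map
  let ι : R →+* S := Subring.inclusion hRS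
  have hιcoe : ∀ r : R, ((ι r : S) : K) = (r : K) := fun r => rfl
  have hmapmS : Ideal.map ι mR ≤ mS := by
    rw [Ideal.map_le_iff_le_comap]
    intro x hx
    exact (hmS (ι x)).mpr (by rw [hιcoe]; exact hbir x hx)
  have hmap : ∀ (n : ℕ) (r : R), r ∈ mR ^ n → ι r ∈ mS ^ n := by
    intro n r hr
    have h1 := Ideal.mem_map_of_mem ι hr
    rw [Ideal.map_pow] at h1
    exact Ideal.pow_right_mono hmapmS n h1
  -- w = v on R
  have hR : ∀ r : R, (r : K) ≠ 0 → w (r : K) = v (r : K) := by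
    intro r h0
    have h0s : ((ι r : S) : K) ≠ 0 := by rw [hιcoe]; exact h0
    refine le_antisymm (by rw [← hιcoe r]; exact hwleS (ι r) h0s) ?_
    rw [hvord r h0]
    -- r belongs to mR ^ (ordfn R mR r)
    have hbddR : BddAbove {n : ℕ | r ∈ mR ^ n} := by
      refine ⟨(v (r : K)).toNat, fun n hn => ?_⟩
      have := key n (ι r) (hmap n r hn) h0s
      rw [hιcoe] at this
      omega
    have hneR : {n : ℕ | r ∈ mR ^ n}.Nonempty := ⟨0, by simp⟩
    have hmem : r ∈ mR ^ (ordfn R mR r) := Nat.sSup_mem hneR hbddR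
    have hmem' : ι r ∈ mS ^ (ordfn R mR r) := hmap _ r hmem
    have hle : ordfn R mR r ≤ ordfn S mS (ι r) := (hordS (ι r) h0s).2 _ hmem'
    have := hword (ι r) h0s
    rw [hιcoe] at this
    rw [this]
    exact_mod_cast hle
  -- w = v on K
  have main : ∀ x : K, x ≠ 0 → w x = v x := by
    intro x hx
    obtain ⟨a, b, hb, hab⟩ := IsFractionRing.div_surjective (A := R) x
    have hbK : (algebraMap R K b) ≠ 0 := by
      simpa using (IsFractionRing.to_map_ne_zero_of_mem_nonZeroDivisors (K := K) hb)
    have hbcoe : algebraMap R K b = (b : K) := rfl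
    have hacoe : algebraMap R K a = (a : K) := rfl
    have haK : (a : K) ≠ 0 := by
      intro h
      rw [← hab, hacoe, h, zero_div] at hx
      exact hx rfl
    rw [hbcoe] at hbK
    have hxb : (a : K) = x * (b : K) := by
      rw [← hab, hacoe, hbcoe]; field_simp
    have h1 : w (a : K) = w x + w (b : K) := by rw [hxb]; exact hwadd x _ hx hbK
    have h2 : v (a : K) = v x + v (b : K) := by rw [hxb]; exact hvadd x _ hx hbK
    have h3 := hR a haK
    have h4 := hR b hbK
    omega
  refine ⟨main, ?_⟩
  ext x
  by_cases hx : x = 0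
  · simp [hx]
  · simp only [Set.mem_setOf_eq, hx, false_or]
    rw [main x hx]
end
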